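/- Let X₁, X₂, X₃, X₄ be independent, identically distributed random variables taking values in [1, C] for some constant C ≥ 1, and put A := X₁ + X₂ and B := X₃ + X₄. Then E[A·B/(A+B)] ≥ 2·E[X₁] / ( E[X₁²]/(E[X₁])² + 1 ). -/

import Mathlib

open MeasureTheory ProbabilityTheory

set_option maxHeartbeats 1600000 in
theorem stmt14 {Ω : Type} [MeasurableSpace Ω] (P : Measure Ω) [IsProbabilityMeasure P]
    (C : ℝ) (hC : 1 ≤ C) (X₁ X₂ X₃ X₄ : Ω → ℝ)
    (hm1 : Measurable X₁) (hm2 : Measurable X₂) (hm3 : Measurable X₃) (hm4 : Measurable X₄)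
    (hindep : iIndepFun ![X₁, X₂, X₃, X₄] P)
    (hid2 : Measure.map X₂ P = Measure.map X₁ P)
    (hid3 : Measure.map X₃ P = Measure.map X₁ P)
    (hid4 : Measure.map X₄ P = Measure.map X₁ P)
    (hbd1 : ∀ᵐ ω ∂P, X₁ ω ∈ Set.Icc 1 C) (hbd2 : ∀ᵐ ω ∂P, X₂ ω ∈ Set.Icc 1 C)
    (hbd3 : ∀ᵐ ω ∂P, X₃ ω ∈ Set.Icc 1 C) (hbd4 : ∀ᵐ ω ∂P, X₄ ω ∈ Set.Icc 1 C) :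
    ∫ ω, (X₁ ω + X₂ ω) * (X₃ ω + X₄ ω) /
        ((X₁ ω + X₂ ω) + (X₃ ω + X₄ ω)) ∂P ≥
      2 * (∫ ω, X₁ ω ∂P) /
        ((∫ ω, (X₁ ω) ^ 2 ∂P) / (∫ ω, X₁ ω ∂P) ^ 2 + 1) := by
  -- generic integrability helper
  have intbd : ∀ (f : Ω → ℝ) (M : ℝ), AEStronglyMeasurable f P →
      (∀ᵐ ω ∂P, |f ω| ≤ M) → Integrable f P := by
    intro f M hf hb
    exact (integrable_const M).mono' hf (by simpa [Real.norm_eq_abs] using hb)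
  -- identical distribution: equal integrals of id and square
  have hEeq : ∀ (X : Ω → ℝ), Measurable X → Measure.map X P = Measure.map X₁ P →
      ∫ ω, X ω ∂P = ∫ ω, X₁ ω ∂P := by
    intro X hm hmap
    have h1 : ∫ ω, X ω ∂P = ∫ y, y ∂(Measure.map X P) :=
      (integral_map hm.aemeasurable measurable_id.aestronglyMeasurable).symm
    have h2 : ∫ y, y ∂(Measure.map X₁ P) = ∫ ω, X₁ ω ∂P :=
      integral_map hm1.aemeasurable measurable_id.aestronglyMeasurable
    rw [h1, hmap, h2]
  have hE2eq : ∀ (X : Ω → ℝ), Measurable X → Measure.map X P = Measure.map X₁ P →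
      ∫ ω, (X ω) ^ 2 ∂P = ∫ ω, (X₁ ω) ^ 2 ∂P := by
    intro X hm hmap
    have hms : AEStronglyMeasurable (fun y : ℝ => y ^ 2) (Measure.map X P) :=
      (measurable_id.pow_const 2).aestronglyMeasurable
    have hms1 : AEStronglyMeasurable (fun y : ℝ => y ^ 2) (Measure.map X₁ P) :=
      (measurable_id.pow_const 2).aestronglyMeasurable
    have h1 : ∫ ω, (X ω) ^ 2 ∂P = ∫ y, y ^ 2 ∂(Measure.map X P) :=
      (integral_map hm.aemeasurable hms).symm
    have h2 : ∫ y, y ^ 2 ∂(Measure.map X₁ P) = ∫ ω, (X₁ ω) ^ 2 ∂P :=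
      integral_map hm1.aemeasurable hms1
    rw [h1, hmap, h2]
  set μ1 : ℝ := ∫ ω, X₁ ω ∂P with hμ1def
  set M2 : ℝ := ∫ ω, (X₁ ω) ^ 2 ∂P with hM2def
  -- integrability of the basic variables
  have mkbd : ∀ (X : Ω → ℝ), (∀ᵐ ω ∂P, X ω ∈ Set.Icc 1 C) → (∀ᵐ ω ∂P, |X ω| ≤ C) := by
    intro X hb
    filter_upwards [hb] with ω h
    rw [abs_of_nonneg (by linarith [h.1])]; exact h.2
  have int1 : Integrable X₁ P := intbd X₁ C hm1.aestronglyMeasurable (mkbd _ hbd1)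
  have int2 : Integrable X₂ P := intbd X₂ C hm2.aestronglyMeasurable (mkbd _ hbd2)
  have int3 : Integrable X₃ P := intbd X₃ C hm3.aestronglyMeasurable (mkbd _ hbd3)
  have int4 : Integrable X₄ P := intbd X₄ C hm4.aestronglyMeasurable (mkbd _ hbd4)
  -- positivity of moments
  have hμ1ge : 1 ≤ μ1 := by
    have : ∫ _ω, (1:ℝ) ∂P ≤ ∫ ω, X₁ ω ∂P := by
      refine integral_mono_ae (integrable_const 1) int1 ?_
      filter_upwards [hbd1] with ω h using h.1
    simpa using this
  have int1sq : Integrable (fun ω => (X₁ ω) ^ 2) P := by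
    refine intbd _ (C ^ 2) (hm1.pow_const 2).aestronglyMeasurable ?_
    filter_upwards [hbd1] with ω h
    rw [abs_of_nonneg (by positivity)]
    nlinarith [h.1, h.2]
  have hM2ge : 1 ≤ M2 := by
    have : ∫ _ω, (1:ℝ) ∂P ≤ ∫ ω, (X₁ ω) ^ 2 ∂P := by
      refine integral_mono_ae (integrable_const 1) int1sq ?_
      filter_upwards [hbd1] with ω h
      nlinarith [h.1, h.2]
    simpa using this
  have hμ1pos : (0:ℝ) < μ1 := by linarith
  have hdenpos : (0:ℝ) < M2 + μ1 ^ 2 := by nlinarith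
  set s : ℝ := 2 * (M2 + μ1 ^ 2) / μ1 with hsdef
  have hspos : 0 < s := by positivity
  -- independence facts
  have hm' : ∀ i, Measurable (![X₁, X₂, X₃, X₄] i) := by
    intro i; fin_cases i <;> simpa
  have h01 : IndepFun X₁ X₂ P := by
    simpa using hindep.indepFun (show (0:Fin 4) ≠ 1 by decide)
  have h34 : IndepFun X₃ X₄ P := by
    simpa using hindep.indepFun (show (2:Fin 4) ≠ 3 by decide)
  have hAB : IndepFun (X₁ + X₂) (X₃ + X₄) P := by
    simpa using hindep.indepFun_add_add hm' 0 1 2 3 (by decide) (by decide) (by decide) (by decide)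
  have hmA : Measurable (X₁ + X₂) := hm1.add hm2
  have hmB : Measurable (X₃ + X₄) := hm3.add hm4
  have hAB' : IndepFun (fun ω => X₁ ω + X₂ ω) (fun ω => X₃ ω + X₄ ω) P := hAB
  have hA2B : IndepFun (fun ω => (X₁ ω + X₂ ω) ^ 2) (fun ω => X₃ ω + X₄ ω) P :=
    hAB.comp (measurable_id.pow_const 2) measurable_id
  have hAB2 : IndepFun (fun ω => X₁ ω + X₂ ω) (fun ω => (X₃ ω + X₄ ω) ^ 2) P :=
    hAB.comp measurable_id (measurable_id.pow_const 2)
  -- identically distributed moments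
  have hE2 : ∫ ω, X₂ ω ∂P = μ1 := hEeq X₂ hm2 hid2
  have hE3 : ∫ ω, X₃ ω ∂P = μ1 := hEeq X₃ hm3 hid3
  have hE4 : ∫ ω, X₄ ω ∂P = μ1 := hEeq X₄ hm4 hid4
  have hE2sq : ∫ ω, (X₂ ω) ^ 2 ∂P = M2 := hE2eq X₂ hm2 hid2
  have hE3sq : ∫ ω, (X₃ ω) ^ 2 ∂P = M2 := hE2eq X₃ hm3 hid3
  have hE4sq : ∫ ω, (X₄ ω) ^ 2 ∂P = M2 := hE2eq X₄ hm4 hid4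
  -- first moments of A and B
  have hEA : ∫ ω, (X₁ ω + X₂ ω) ∂P = 2 * μ1 := by
    rw [integral_add int1 int2, hE2]; ring
  have hEB : ∫ ω, (X₃ ω + X₄ ω) ∂P = 2 * μ1 := by
    rw [integral_add int3 int4, hE3, hE4]; ring
  -- second moments of A and B
  have intmul : ∀ (X Y : Ω → ℝ), Measurable X → Measurable Y →
      (∀ᵐ ω ∂P, X ω ∈ Set.Icc 1 C) → (∀ᵐ ω ∂P, Y ω ∈ Set.Icc 1 C) →
      Integrable (fun ω => X ω * Y ω) P := by
    intro X Y hX hY hbX hbY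
    refine intbd _ (C * C) (hX.mul hY).aestronglyMeasurable ?_
    filter_upwards [hbX, hbY] with ω h1 h2
    rw [abs_of_nonneg (by nlinarith [h1.1, h2.1])]
    nlinarith [h1.1, h1.2, h2.1, h2.2]
  have hE12 : ∫ ω, X₁ ω * X₂ ω ∂P = μ1 * μ1 := by
    rw [h01.integral_fun_mul_eq_mul_integral hm1.aestronglyMeasurable hm2.aestronglyMeasurable, hE2]
  have hE34 : ∫ ω, X₃ ω * X₄ ω ∂P = μ1 * μ1 := by
    rw [h34.integral_fun_mul_eq_mul_integral hm3.aestronglyMeasurable hm4.aestronglyMeasurable, hE3, hE4]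
  have int12 : Integrable (fun ω => X₁ ω * X₂ ω) P := intmul _ _ hm1 hm2 hbd1 hbd2
  have int34 : Integrable (fun ω => X₃ ω * X₄ ω) P := intmul _ _ hm3 hm4 hbd3 hbd4
  have int2sq : Integrable (fun ω => (X₂ ω) ^ 2) P := by
    simpa [sq] using intmul _ _ hm2 hm2 hbd2 hbd2
  have int3sq : Integrable (fun ω => (X₃ ω) ^ 2) P := by
    simpa [sq] using intmul _ _ hm3 hm3 hbd3 hbd3
  have int4sq : Integrable (fun ω => (X₄ ω) ^ 2) P := by
    simpa [sq] using intmul _ _ hm4 hm4 hbd4 hbd4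
  have hEA2 : ∫ ω, (X₁ ω + X₂ ω) ^ 2 ∂P = 2 * M2 + 2 * μ1 ^ 2 := by
    have hrw : ∀ ω, (X₁ ω + X₂ ω) ^ 2
        = (X₁ ω) ^ 2 + (2 * (X₁ ω * X₂ ω) + (X₂ ω) ^ 2) := by intro ω; ring
    simp_rw [hrw]
    have hint : Integrable (fun ω => 2 * (X₁ ω * X₂ ω) + (X₂ ω) ^ 2) P :=
      (int12.const_mul 2).add int2sq
    rw [integral_add int1sq hint, integral_add (int12.const_mul 2) int2sq,
      integral_const_mul, hE12, hE2sq]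
    ring
  have hEB2 : ∫ ω, (X₃ ω + X₄ ω) ^ 2 ∂P = 2 * M2 + 2 * μ1 ^ 2 := by
    have hrw : ∀ ω, (X₃ ω + X₄ ω) ^ 2
        = (X₃ ω) ^ 2 + (2 * (X₃ ω * X₄ ω) + (X₄ ω) ^ 2) := by intro ω; ring
    simp_rw [hrw]
    have hint : Integrable (fun ω => 2 * (X₃ ω * X₄ ω) + (X₄ ω) ^ 2) P :=
      (int34.const_mul 2).add int4sq
    rw [integral_add int3sq hint, integral_add (int34.const_mul 2) int4sq,
      integral_const_mul, hE34, hE3sq, hE4sq]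
    ring
  -- cross moments via independence
  have hEABm : ∫ ω, (X₁ ω + X₂ ω) * (X₃ ω + X₄ ω) ∂P = (2 * μ1) * (2 * μ1) := by
    rw [hAB'.integral_fun_mul_eq_mul_integral hmA.aestronglyMeasurable hmB.aestronglyMeasurable, hEA, hEB]
  have hEA2Bm : ∫ ω, (X₁ ω + X₂ ω) ^ 2 * (X₃ ω + X₄ ω) ∂P
      = (2 * M2 + 2 * μ1 ^ 2) * (2 * μ1) := by
    rw [hA2B.integral_fun_mul_eq_mul_integral (hmA.pow_const 2).aestronglyMeasurable hmB.aestronglyMeasurable,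
      hEA2, hEB]
  have hEAB2m : ∫ ω, (X₁ ω + X₂ ω) * (X₃ ω + X₄ ω) ^ 2 ∂P
      = (2 * μ1) * (2 * M2 + 2 * μ1 ^ 2) := by
    rw [hAB2.integral_fun_mul_eq_mul_integral hmA.aestronglyMeasurable (hmB.pow_const 2).aestronglyMeasurable,
      hEA, hEB2]
  -- integrability of the cross terms
  have bdsA : ∀ᵐ ω ∂P, 2 ≤ X₁ ω + X₂ ω ∧ X₁ ω + X₂ ω ≤ 2 * C := by
    filter_upwards [hbd1, hbd2] with ω h1 h2
    constructor <;> [linarith [h1.1, h2.1]; linarith [h1.2, h2.2]]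
  have bdsB : ∀ᵐ ω ∂P, 2 ≤ X₃ ω + X₄ ω ∧ X₃ ω + X₄ ω ≤ 2 * C := by
    filter_upwards [hbd3, hbd4] with ω h1 h2
    constructor <;> [linarith [h1.1, h2.1]; linarith [h1.2, h2.2]]
  have intABm : Integrable (fun ω => (X₁ ω + X₂ ω) * (X₃ ω + X₄ ω)) P := by
    refine intbd _ (2 * C * (2 * C)) (hmA.mul hmB).aestronglyMeasurable ?_
    filter_upwards [bdsA, bdsB] with ω h1 h2
    rw [abs_of_nonneg (by nlinarith [h1.1, h2.1])]
    nlinarith [h1.1, h1.2, h2.1, h2.2]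
  have intA2Bm : Integrable (fun ω => (X₁ ω + X₂ ω) ^ 2 * (X₃ ω + X₄ ω)) P := by
    refine intbd _ ((2 * C) ^ 2 * (2 * C)) ((hmA.pow_const 2).mul hmB).aestronglyMeasurable ?_
    filter_upwards [bdsA, bdsB] with ω h1 h2
    rw [abs_of_nonneg (by nlinarith [h1.1, h2.1])]
    have ha2 : (X₁ ω + X₂ ω) ^ 2 ≤ (2 * C) ^ 2 := by nlinarith [h1.1, h1.2]
    calc (X₁ ω + X₂ ω) ^ 2 * (X₃ ω + X₄ ω) ≤ (2 * C) ^ 2 * (X₃ ω + X₄ ω) :=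
          mul_le_mul_of_nonneg_right ha2 (by linarith [h2.1])
      _ ≤ (2 * C) ^ 2 * (2 * C) := mul_le_mul_of_nonneg_left h2.2 (by positivity)
  have intAB2m : Integrable (fun ω => (X₁ ω + X₂ ω) * (X₃ ω + X₄ ω) ^ 2) P := by
    refine intbd _ (2 * C * (2 * C) ^ 2) (hmA.mul (hmB.pow_const 2)).aestronglyMeasurable ?_
    filter_upwards [bdsA, bdsB] with ω h1 h2
    rw [abs_of_nonneg (by nlinarith [h1.1, h2.1])]
    have hb2 : (X₃ ω + X₄ ω) ^ 2 ≤ (2 * C) ^ 2 := by nlinarith [h2.1, h2.2]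
    calc (X₁ ω + X₂ ω) * (X₃ ω + X₄ ω) ^ 2 ≤ (X₁ ω + X₂ ω) * (2 * C) ^ 2 :=
          mul_le_mul_of_nonneg_left hb2 (by linarith [h1.1])
      _ ≤ 2 * C * (2 * C) ^ 2 := mul_le_mul_of_nonneg_right h1.2 (by positivity)
  -- the auxiliary function g
  have intg : Integrable (fun ω =>
      (2 * s * ((X₁ ω + X₂ ω) * (X₃ ω + X₄ ω)) - (X₁ ω + X₂ ω) ^ 2 * (X₃ ω + X₄ ω)
        - (X₁ ω + X₂ ω) * (X₃ ω + X₄ ω) ^ 2) / s ^ 2) P := by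
    refine Integrable.div_const ?_ (s ^ 2)
    exact ((intABm.const_mul (2 * s)).sub intA2Bm).sub intAB2m
  have intf : Integrable (fun ω => (X₁ ω + X₂ ω) * (X₃ ω + X₄ ω) /
      ((X₁ ω + X₂ ω) + (X₃ ω + X₄ ω))) P := by
    refine intbd _ (C ^ 2) ((hmA.mul hmB).div (hmA.add hmB)).aestronglyMeasurable ?_
    filter_upwards [bdsA, bdsB] with ω h1 h2
    have ha : (0:ℝ) < X₁ ω + X₂ ω := by linarith [h1.1]
    have hb : (0:ℝ) < X₃ ω + X₄ ω := by linarith [h2.1]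
    have hab : (0:ℝ) < (X₁ ω + X₂ ω) + (X₃ ω + X₄ ω) := by linarith
    rw [abs_of_nonneg (by positivity)]
    rw [div_le_iff₀ hab]
    have h4 : (4:ℝ) ≤ (X₁ ω + X₂ ω) + (X₃ ω + X₄ ω) := by linarith [h1.1, h2.1]
    have hC2 : (0:ℝ) < C ^ 2 := by positivity
    have hab4 : (X₁ ω + X₂ ω) * (X₃ ω + X₄ ω) ≤ 4 * C ^ 2 := by
      nlinarith [h1.1, h1.2, h2.1, h2.2]
    nlinarith [mul_le_mul_of_nonneg_left h4 hC2.le]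
  -- pointwise inequality
  have hpt : ∀ᵐ ω ∂P,
      (2 * s * ((X₁ ω + X₂ ω) * (X₃ ω + X₄ ω)) - (X₁ ω + X₂ ω) ^ 2 * (X₃ ω + X₄ ω)
        - (X₁ ω + X₂ ω) * (X₃ ω + X₄ ω) ^ 2) / s ^ 2
      ≤ (X₁ ω + X₂ ω) * (X₃ ω + X₄ ω) /
      ((X₁ ω + X₂ ω) + (X₃ ω + X₄ ω)) := by
    filter_upwards [bdsA, bdsB] with ω h1 h2
    set a := X₁ ω + X₂ ω
    set b := X₃ ω + X₄ ω
    have ha : (0:ℝ) < a := by linarith [h1.1]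
    have hb : (0:ℝ) < b := by linarith [h2.1]
    have habp : (0:ℝ) < a + b := by linarith
    rw [div_le_div_iff₀ (by positivity) habp]
    nlinarith [mul_nonneg (mul_nonneg ha.le hb.le) (sq_nonneg (s - (a + b)))]
  have step1 : (∫ ω, (2 * s * ((X₁ ω + X₂ ω) * (X₃ ω + X₄ ω))
        - (X₁ ω + X₂ ω) ^ 2 * (X₃ ω + X₄ ω)
        - (X₁ ω + X₂ ω) * (X₃ ω + X₄ ω) ^ 2) / s ^ 2 ∂P)
      ≤ ∫ ω, (X₁ ω + X₂ ω) * (X₃ ω + X₄ ω) /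
      ((X₁ ω + X₂ ω) + (X₃ ω + X₄ ω)) ∂P := integral_mono_ae intg intf hpt
  -- compute the integral of g
  have hgint : (∫ ω, (2 * s * ((X₁ ω + X₂ ω) * (X₃ ω + X₄ ω))
        - (X₁ ω + X₂ ω) ^ 2 * (X₃ ω + X₄ ω)
        - (X₁ ω + X₂ ω) * (X₃ ω + X₄ ω) ^ 2) / s ^ 2 ∂P)
      = (2 * s * ((2 * μ1) * (2 * μ1))
      - (2 * M2 + 2 * μ1 ^ 2) * (2 * μ1) - (2 * μ1) * (2 * M2 + 2 * μ1 ^ 2)) / s ^ 2 := by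
    rw [integral_div]
    have i1 : Integrable (fun ω => 2 * s * ((X₁ ω + X₂ ω) * (X₃ ω + X₄ ω))
        - (X₁ ω + X₂ ω) ^ 2 * (X₃ ω + X₄ ω)) P := (intABm.const_mul (2 * s)).sub intA2Bm
    rw [integral_sub i1 intAB2m, integral_sub (intABm.const_mul (2 * s)) intA2Bm,
      integral_const_mul, hEABm, hEA2Bm, hEAB2m]
  -- final computation
  have hval : (∫ ω, (2 * s * ((X₁ ω + X₂ ω) * (X₃ ω + X₄ ω))
        - (X₁ ω + X₂ ω) ^ 2 * (X₃ ω + X₄ ω)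
        - (X₁ ω + X₂ ω) * (X₃ ω + X₄ ω) ^ 2) / s ^ 2 ∂P)
      = 2 * μ1 / (M2 / μ1 ^ 2 + 1) := by
    rw [hgint, hsdef]
    have h1 : μ1 ≠ 0 := ne_of_gt hμ1pos
    have h2 : M2 + μ1 ^ 2 ≠ 0 := ne_of_gt hdenpos
    field_simp
    ring
  rw [ge_iff_le]
  calc 2 * μ1 / (M2 / μ1 ^ 2 + 1)
      = ∫ ω, (2 * s * ((X₁ ω + X₂ ω) * (X₃ ω + X₄ ω))
        - (X₁ ω + X₂ ω) ^ 2 * (X₃ ω + X₄ ω)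
        - (X₁ ω + X₂ ω) * (X₃ ω + X₄ ω) ^ 2) / s ^ 2 ∂P := hval.symm
    _ ≤ _ := step1
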